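/- For abelian groups G and H, there is an isomorphism Γ(G × H) ≅ Γ(G) × Γ(H) × (G ⊗ H), where G ⊗ H is the usual tensor product of abelian groups. -/

import Mathlib

universe u

open scoped commutatorElement

/-- Relations for Whitehead's universal quadratic functor Γ. -/
def gammaRels (A : Type u) [CommGroup A] : Set (FreeGroup A) :=
  { r | (∃ a : A, r = FreeGroup.of a⁻¹ * (FreeGroup.of a)⁻¹) ∨
        (∃ a b c : A, r =
          FreeGroup.of (a * b * c) * FreeGroup.of a * FreeGroup.of b * FreeGroup.of c *
            (FreeGroup.of (a * b) * FreeGroup.of (b * c) * FreeGroup.of (c * a))⁻¹) ∨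
        (∃ x y : FreeGroup A, r = x * y * x⁻¹ * y⁻¹) }

/-- Whitehead's universal quadratic functor. -/
def Gamma (A : Type u) [CommGroup A] : Type u := PresentedGroup (gammaRels A)

instance (A : Type u) [CommGroup A] : Group (Gamma A) :=
  inferInstanceAs (Group (PresentedGroup (gammaRels A)))

/-- Relations of the non-abelian tensor square. -/
def tensorRels (G : Type u) [Group G] : Set (FreeGroup (G × G)) :=
  { r | (∃ g g' h : G, r = FreeGroup.of (g * g', h) *
          (FreeGroup.of (g * g' * g⁻¹, g * h * g⁻¹) * FreeGroup.of (g, h))⁻¹) ∨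
        (∃ g h h' : G, r = FreeGroup.of (g, h * h') *
          (FreeGroup.of (g, h) * FreeGroup.of (h * g * h⁻¹, h * h' * h⁻¹))⁻¹) }

/-- The non-abelian tensor square `G ⊗ G`. -/
def TensorSquare (G : Type u) [Group G] : Type u := PresentedGroup (tensorRels G)

instance (G : Type u) [Group G] : Group (TensorSquare G) :=
  inferInstanceAs (Group (PresentedGroup (tensorRels G)))

/-- The generator `g ⊗ h` of the non-abelian tensor square. -/
def tmul {G : Type u} [Group G] (g h : G) : TensorSquare G :=
  PresentedGroup.of (g, h)

/-- Relations of the non-abelian exterior square. -/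
def exteriorRels (G : Type u) [Group G] : Set (FreeGroup (G × G)) :=
  tensorRels G ∪ { r | ∃ g : G, r = FreeGroup.of (g, g) }

/-- The non-abelian exterior square `G ∧ G`. -/
def ExteriorSquare (G : Type u) [Group G] : Type u := PresentedGroup (exteriorRels G)

instance (G : Type u) [Group G] : Group (ExteriorSquare G) :=
  inferInstanceAs (Group (PresentedGroup (exteriorRels G)))

/-- The generator `g ∧ h` of the non-abelian exterior square. -/
def wedge {G : Type u} [Group G] (g h : G) : ExteriorSquare G :=
  PresentedGroup.of (g, h)

namespace GammaProdAux

variable {A : Type u} [CommGroup A]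

def w (a : A) : Gamma A := PresentedGroup.of a

lemma rel_eq_one {r : FreeGroup A} (hr : r ∈ gammaRels A) :
    (PresentedGroup.mk (gammaRels A)) r = 1 :=
  (QuotientGroup.eq_one_iff (N := Subgroup.normalClosure (gammaRels A)) r).2
    (Subgroup.subset_normalClosure hr)

instance : CommGroup (Gamma A) :=
  { (inferInstance : Group (Gamma A)) with
    mul_comm := by
      intro x y
      induction x using PresentedGroup.induction_on with
      | H a =>
      induction y using PresentedGroup.induction_on with
      | H b =>
      have h : (PresentedGroup.mk (gammaRels A)) (a * b * a⁻¹ * b⁻¹) = 1 :=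
        rel_eq_one (Or.inr (Or.inr ⟨a, b, rfl⟩))
      simp only [map_mul, map_inv] at h
      have h2 : ⁅(PresentedGroup.mk (gammaRels A)) a, (PresentedGroup.mk (gammaRels A)) b⁆ = 1 := by
        simpa [commutatorElement_def, map_mul, map_inv, mul_assoc] using h
      exact commutatorElement_eq_one_iff_mul_comm.1 h2 }

end GammaProdAux

namespace GammaProdAux2
variable {A : Type u} [CommGroup A]
open GammaProdAux

lemma rel3 (a b c : A) :
    w (a*b*c) * w a * w b * w c = w (a*b) * w (b*c) * w (c*a) := by
  have h := rel_eq_one (A := A) (Or.inr (Or.inl ⟨a, b, c, rfl⟩))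
  simp only [map_mul, map_inv] at h
  rw [mul_inv_eq_one] at h
  exact h

lemma w_inv (a : A) : w a⁻¹ = w a := by
  have h := rel_eq_one (A := A) (Or.inl ⟨a, rfl⟩)
  simp only [map_mul, map_inv] at h
  rw [mul_inv_eq_one] at h
  exact h

lemma w_one : w (1:A) = 1 := by
  have h := rel3 (1:A) 1 1
  simp only [one_mul, mul_one] at h
  exact mul_left_cancel (a := w (1:A) * w 1 * w 1) (by rw [mul_one]; exact h)

/-- additive version of the generator -/
def W (a : A) : Additive (Gamma A) := Additive.ofMul (w a)

lemma rel3' (a b c : A) :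
    W (a*b*c) + W a + W b + W c = W (a*b) + W (b*c) + W (c*a) :=
  congrArg Additive.ofMul (rel3 a b c)

lemma W_one : W (1:A) = 0 := congrArg Additive.ofMul w_one

/-- the cross term -/
def b2 (a b : A) : Additive (Gamma A) := W (a*b) - W a - W b

lemma b2_comm (a b : A) : b2 a b = b2 b a := by
  unfold b2; rw [mul_comm]; abel

lemma b2_add_left (a a' b : A) : b2 (a*a') b = b2 a b + b2 a' b := by
  have h := rel3' a a' b
  have e : W (a*a'*b) = W (a*a') + W (a'*b) + W (b*a) - W a - W a' - W b := by
    rw [← h]; abel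
  unfold b2
  rw [e, mul_comm b a]
  abel

lemma b2_one_left (b : A) : b2 1 b = 0 := by
  unfold b2; rw [one_mul, W_one]; abel

lemma b2_one_right (a : A) : b2 a 1 = 0 := by
  rw [b2_comm]; exact b2_one_left a

lemma b2_add_right (a b b' : A) : b2 a (b*b') = b2 a b + b2 a b' := by
  rw [b2_comm, b2_add_left, b2_comm, b2_comm b']

end GammaProdAux2

namespace GammaProdAux3
open GammaProdAux GammaProdAux2
variable {A B : Type u} [CommGroup A] [CommGroup B]

/-- functoriality of Gamma -/
def gmap (f : A →* B) : Gamma A →* Gamma B :=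
  PresentedGroup.toGroup (f := fun a => w (f a)) (by
    rintro r (⟨a, rfl⟩ | ⟨a, b, c, rfl⟩ | ⟨x, y, rfl⟩)
    · simp only [map_mul, map_inv, FreeGroup.lift_apply_of]
      rw [mul_inv_eq_one]; exact w_inv _
    · simp only [map_mul, map_inv, FreeGroup.lift_apply_of]
      rw [mul_inv_eq_one]
      exact rel3 _ _ _
    · have h : ⁅FreeGroup.lift (fun a => w (f a)) x, FreeGroup.lift (fun a => w (f a)) y⁆ = 1 :=
        commutatorElement_eq_one_iff_mul_comm.2 (mul_comm _ _)
      rw [commutatorElement_def] at h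
      simp only [map_mul, map_inv]
      exact h)

@[simp] lemma gmap_w (f : A →* B) (a : A) : gmap f (w a) = w (f a) :=
  PresentedGroup.toGroup.of _

end GammaProdAux3

namespace GammaProdMain
open GammaProdAux GammaProdAux2 GammaProdAux3

variable (G H : Type u) [CommGroup G] [CommGroup H]

local notation "TT" => TensorProduct ℤ (Additive G) (Additive H)

noncomputable def f0 : G × H → Gamma G × Gamma H × Multiplicative TT := fun p =>
  (w p.1, w p.2, Multiplicative.ofAdd (Additive.ofMul p.1 ⊗ₜ[ℤ] Additive.ofMul p.2))

noncomputable def Psi : Gamma (G × H) →* Gamma G × Gamma H × Multiplicative TT :=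
  PresentedGroup.toGroup (f := f0 G H) (by
    rintro r (⟨a, rfl⟩ | ⟨a, b, c, rfl⟩ | ⟨x, y, rfl⟩)
    · simp only [map_mul, map_inv, FreeGroup.lift_apply_of, mul_inv_eq_one]
      show f0 G H a⁻¹ = f0 G H a
      unfold f0
      simp only [Prod.fst_inv, Prod.snd_inv, w_inv, ofMul_inv, TensorProduct.neg_tmul, TensorProduct.tmul_neg, neg_neg]
    · simp only [map_mul, map_inv, FreeGroup.lift_apply_of, mul_inv_eq_one]
      show f0 G H (a*b*c) * f0 G H a * f0 G H b * f0 G H c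
          = f0 G H (a*b) * f0 G H (b*c) * f0 G H (c*a)
      unfold f0
      simp only [Prod.fst_mul, Prod.snd_mul, Prod.mk_mul_mk, Prod.mk.injEq, ← ofAdd_add,
        ofMul_mul, EmbeddingLike.apply_eq_iff_eq]
      refine ⟨rel3 _ _ _, rel3 _ _ _, ?_⟩
      simp only [TensorProduct.add_tmul, TensorProduct.tmul_add]
      abel
    · have h : ⁅FreeGroup.lift (f0 G H) x, FreeGroup.lift (f0 G H) y⁆ = 1 :=
        commutatorElement_eq_one_iff_mul_comm.2 (mul_comm _ _)
      rw [commutatorElement_def] at h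
      simp only [map_mul, map_inv]
      exact h)

@[simp] lemma Psi_w (p : G × H) : Psi G H (w p) = f0 G H p :=
  PresentedGroup.toGroup.of _

noncomputable def crossAdd : Additive G →+ Additive H →+ Additive (Gamma (G × H)) :=
  AddMonoidHom.mk' (fun g => AddMonoidHom.mk'
      (fun h => b2 ((g.toMul, 1) : G × H) ((1, h.toMul) : G × H))
      (fun h h' => by
        show b2 _ _ = _
        have e : ((1, (h + h').toMul) : G × H) = ((1, h.toMul) : G × H) * ((1, h'.toMul) : G × H) := by
          simp [Prod.mk_mul_mk]
        rw [e, b2_add_right]))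
    (fun g g' => by
      refine AddMonoidHom.ext fun h => ?_
      have e : (((g + g').toMul, 1) : G × H) = ((g.toMul, 1) : G × H) * ((g'.toMul, 1) : G × H) := by
        simp [Prod.mk_mul_mk]
      show b2 _ _ = _
      simp only [AddMonoidHom.mk'_apply, AddMonoidHom.add_apply]
      rw [e, b2_add_left])

noncomputable def tenHom : TT →+ Additive (Gamma (G × H)) :=
  TensorProduct.liftAddHom (crossAdd G H) (by
    intro z g h
    rw [map_zsmul (crossAdd G H), AddMonoidHom.smul_apply, map_zsmul]
    )

noncomputable def PhiT : Multiplicative TT →* Gamma (G × H) :=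
  AddMonoidHom.toMultiplicativeLeft (tenHom G H)

@[simp] lemma PhiT_ofAdd_tmul (g : G) (h : H) :
    PhiT G H (Multiplicative.ofAdd (Additive.ofMul g ⊗ₜ[ℤ] Additive.ofMul h)) =
      (b2 ((g, 1) : G × H) ((1, h) : G × H)).toMul := by
  rfl

noncomputable def Phi : Gamma G × Gamma H × Multiplicative TT →* Gamma (G × H) :=
  ((gmap (MonoidHom.inl G H)).comp (MonoidHom.fst _ _)) *
  ((gmap (MonoidHom.inr G H)).comp ((MonoidHom.fst _ _).comp (MonoidHom.snd _ _))) *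
  ((PhiT G H).comp ((MonoidHom.snd _ _).comp (MonoidHom.snd _ _)))

lemma Phi_apply (x : Gamma G) (y : Gamma H) (z : Multiplicative TT) :
    Phi G H (x, y, z) = gmap (MonoidHom.inl G H) x * gmap (MonoidHom.inr G H) y * PhiT G H z :=
  rfl

@[simp] lemma ofMul_w (p : G × H) : Additive.ofMul (w p) = W p := rfl

lemma comp1 : (Phi G H).comp (Psi G H) = MonoidHom.id (Gamma (G × H)) := by
  apply PresentedGroup.ext
  rintro ⟨g, h⟩
  show Phi G H (Psi G H (w (g, h))) = w (g, h)
  rw [Psi_w]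
  show Phi G H (f0 G H (g, h)) = _
  unfold f0
  rw [Phi_apply, gmap_w, gmap_w, PhiT_ofAdd_tmul]
  show w ((g, 1) : G × H) * w ((1, h) : G × H) * _ = _
  unfold b2
  rw [show ((g, 1) : G × H) * ((1, h) : G × H) = (g, h) by simp [Prod.mk_mul_mk]]
  apply Additive.ofMul.injective
  simp only [ofMul_mul, ofMul_toMul, ofMul_w]
  abel

lemma PsiPhi1 : (Psi G H).comp (gmap (MonoidHom.inl G H)) =
    MonoidHom.inl (Gamma G) (Gamma H × Multiplicative TT) := by
  apply PresentedGroup.ext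
  intro g
  show Psi G H (gmap (MonoidHom.inl G H) (w g)) = (w g, 1, 1)
  rw [gmap_w, Psi_w]
  show (w ((MonoidHom.inl G H) g).1, w ((MonoidHom.inl G H) g).2, _) = _
  simp [MonoidHom.inl_apply, w_one, Prod.mk.injEq, TensorProduct.tmul_zero]

lemma PsiPhi2 : (Psi G H).comp (gmap (MonoidHom.inr G H)) =
    (MonoidHom.inr (Gamma G) (Gamma H × Multiplicative TT)).comp
      (MonoidHom.inl (Gamma H) (Multiplicative TT)) := by
  apply PresentedGroup.ext
  intro h
  show Psi G H (gmap (MonoidHom.inr G H) (w h)) = (1, w h, 1)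
  rw [gmap_w, Psi_w]
  show (w ((MonoidHom.inr G H) h).1, w ((MonoidHom.inr G H) h).2, _) = _
  simp [MonoidHom.inr_apply, w_one, Prod.mk.injEq, TensorProduct.zero_tmul]

lemma addHom_ext {K : Type u} [AddCommGroup K] {f g : TT →+ K}
    (hfg : ∀ (a : Additive G) (b : Additive H), f (a ⊗ₜ b) = g (a ⊗ₜ b)) : f = g := by
  have h2 : f.toIntLinearMap = g.toIntLinearMap := TensorProduct.ext' hfg
  ext x
  exact congrArg (fun (m : TT →ₗ[ℤ] K) => m x) h2

lemma PsiPhi3 : (Psi G H).comp (PhiT G H) =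
    (MonoidHom.inr (Gamma G) (Gamma H × Multiplicative TT)).comp
      (MonoidHom.inr (Gamma H) (Multiplicative TT)) := by
  apply (AddMonoidHom.toMultiplicativeLeft
    (α := TT) (β := Gamma G × Gamma H × Multiplicative TT)).symm.injective
  apply addHom_ext
  intro a b
  show Additive.ofMul ((Psi G H) ((PhiT G H) (Multiplicative.ofAdd (a ⊗ₜ b)))) =
    Additive.ofMul ((1, 1, Multiplicative.ofAdd (a ⊗ₜ b)) :
      Gamma G × Gamma H × Multiplicative TT)
  congr 1
  rw [show (a ⊗ₜ b : TT) = (Additive.ofMul a.toMul ⊗ₜ Additive.ofMul b.toMul : TT) by rfl,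
    PhiT_ofAdd_tmul]
  unfold b2
  rw [show ((a.toMul, 1) : G × H) * ((1, b.toMul) : G × H) = (a.toMul, b.toMul) by
    simp [Prod.mk_mul_mk]]
  rw [toMul_sub, toMul_sub]
  show Psi G H ((w (a.toMul, b.toMul) / w (a.toMul, 1)) / w (1, b.toMul)) = _
  rw [map_div, map_div, Psi_w, Psi_w, Psi_w]
  unfold f0
  ext <;> simp [w_one, TensorProduct.tmul_zero, TensorProduct.zero_tmul]

lemma comp2 : (Psi G H).comp (Phi G H) =
    MonoidHom.id (Gamma G × Gamma H × Multiplicative TT) := by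
  apply MonoidHom.ext
  rintro ⟨x, y, z⟩
  have hd : ((x, y, z) : Gamma G × Gamma H × Multiplicative TT) =
      (x, 1, 1) * (1, y, 1) * (1, 1, z) := by
    simp [Prod.mk_mul_mk]
  show Psi G H (Phi G H (x, y, z)) = (x, y, z)
  rw [hd, map_mul, map_mul, map_mul, map_mul]
  rw [show Phi G H (x, 1, 1) = gmap (MonoidHom.inl G H) x by
      rw [Phi_apply]; simp,
    show Phi G H (1, y, 1) = gmap (MonoidHom.inr G H) y by
      rw [Phi_apply]; simp,
    show Phi G H (1, 1, z) = PhiT G H z by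
      rw [Phi_apply]; simp]
  rw [show Psi G H (gmap (MonoidHom.inl G H) x) = (x, 1, 1) from
      DFunLike.congr_fun (PsiPhi1 G H) x,
    show Psi G H (gmap (MonoidHom.inr G H) y) = (1, y, 1) from
      DFunLike.congr_fun (PsiPhi2 G H) y,
    show Psi G H (PhiT G H z) = (1, 1, z) from
      DFunLike.congr_fun (PsiPhi3 G H) z]

end GammaProdMain

theorem gamma_prod (G H : Type u) [CommGroup G] [CommGroup H] :
    Nonempty (Gamma (G × H) ≃*
      Gamma G × Gamma H ×
        Multiplicative (TensorProduct ℤ (Additive G) (Additive H))) := by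
  exact ⟨MonoidHom.toMulEquiv (GammaProdMain.Psi G H) (GammaProdMain.Phi G H)
    (GammaProdMain.comp1 G H) (GammaProdMain.comp2 G H)⟩
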